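/- Let π satisfy Assumption 1 with constants ε_π, δ_π, and let c : (0,1) → [0,∞) be a decreasing function with ∫_0^1 c(ε)π(ε) dε < ∞. Let n ≥ 1 and let x_1,...,x_n be reals with x_i ≥ -1 for all i. If S_n > 0, S_n²/A_n² > max(2, 1/ε_π) and S_n³/A_n⁴ < 1/2, then K_n^{cπ} ≥ c(u_n)·(1/(6e))·(1/A_n)·π(S_n/A_n²)·exp(S_n²/(2·A_n²)), where u_n = ((1 + A_n/S_n)/(1 + A_n²/S_n²))·(S_n/A_n²) and K_n^{cπ} = ∫_0^1 ∏_{i=1}^n (1 + ε x_i)·c(ε)·π(ε) dε. -/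

import Mathlib

open MeasureTheory Filter Set

/-- Partial sum `S_n = x_1 + ... + x_n`. -/
noncomputable def S (x : ℕ → ℝ) (n : ℕ) : ℝ := ∑ i ∈ Finset.range n, x i

/-- Sum of squares `A_n² = x_1² + ... + x_n²`. -/
noncomputable def A2 (x : ℕ → ℝ) (n : ℕ) : ℝ := ∑ i ∈ Finset.range n, (x i) ^ 2

/-- Capital process of the Bayesian strategy with prior density `π`:
`K_n^π = ∫_0^1 ∏_{i=1}^n (1 + ε x_i) π(ε) dε`. -/
noncomputable def K (π : ℝ → ℝ) (x : ℕ → ℝ) (n : ℕ) : ℝ :=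
  ∫ ε in Set.Ioo (0 : ℝ) 1, (∏ i ∈ Finset.range n, (1 + ε * x i)) * π ε

/-- Assumption 1: `π` is a prior density, bounded below by `δπ` near the origin,
and `ε ↦ ε·π(ε)` is (weakly) increasing near the origin. -/
def Assumption1 (π : ℝ → ℝ) (επ δπ : ℝ) : Prop :=
  επ ∈ Set.Ioo (0 : ℝ) 1 ∧ 0 < δπ ∧
  (∀ ε ∈ Set.Icc (0 : ℝ) 1, 0 ≤ π ε) ∧
  MeasureTheory.IntegrableOn π (Set.Icc (0 : ℝ) 1) ∧
  (∀ ε ∈ Set.Ioo (0 : ℝ) επ, δπ ≤ π ε) ∧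
  MonotoneOn (fun ε => ε * π ε) (Set.Ioo (0 : ℝ) επ)


lemma hasDeriv_logpart (z : ℝ) (hz : (1:ℝ) + z ≠ 0) :
    HasDerivAt (fun y : ℝ => Real.log (1+y)) (1/(1+z)) z := by
  have h : HasDerivAt (fun y : ℝ => 1 + y) 1 z := by
    simpa using (hasDerivAt_id z).const_add 1
  simpa using h.log hz

lemma logA (y : ℝ) (hy : 0 ≤ y) : y - y^2/2 ≤ Real.log (1+y) := by
  have key : MonotoneOn (fun y : ℝ => Real.log (1+y) - (y - y^2/2)) (Set.Ici 0) := by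
    have hd : ∀ z ∈ Set.Ioi (0:ℝ), HasDerivAt (fun y : ℝ => Real.log (1+y) - (y - y^2/2))
        (1/(1+z) - (1 - z)) z := by
      intro z hz
      simp only [Set.mem_Ioi] at hz
      have h2 : HasDerivAt (fun y : ℝ => y - y^2/2) (1 - z) z := by
        have := (hasDerivAt_id z).sub ((hasDerivAt_pow 2 z).div_const 2)
        exact this.congr_deriv (by push_cast; ring)
      exact (hasDeriv_logpart z (by linarith)).sub h2
    apply monotoneOn_of_deriv_nonneg (convex_Ici 0)
    · apply ContinuousOn.sub
      · apply ContinuousOn.log (by fun_prop)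
        intro z hz; simp only [Set.mem_Ici] at hz; linarith
      · fun_prop
    · rw [interior_Ici]
      intro z hz
      exact (hd z hz).differentiableAt.differentiableWithinAt
    · rw [interior_Ici]
      intro z hz
      rw [(hd z hz).deriv]
      have hz' : (0:ℝ) < z := hz
      rw [sub_nonneg, le_div_iff₀ (by linarith)]
      nlinarith
  have h0 : (fun y : ℝ => Real.log (1+y) - (y - y^2/2)) 0 ≤ _ := key (Set.self_mem_Ici) hy hy
  simp at h0
  linarith

lemma logB (y : ℝ) (hy : -(1/2) ≤ y) (hy2 : y ≤ 0) :
    y - y^2/2 + y^3/3 - 2*y^4 ≤ Real.log (1+y) := by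
  have key : AntitoneOn (fun y : ℝ => Real.log (1+y) - (y - y^2/2 + y^3/3 - 2*y^4))
      (Set.Icc (-(1/2)) 0) := by
    have hd : ∀ z ∈ Set.Ioo (-(1/2):ℝ) 0, HasDerivAt
        (fun y : ℝ => Real.log (1+y) - (y - y^2/2 + y^3/3 - 2*y^4))
        (1/(1+z) - (1 - z + z^2 - 8*z^3)) z := by
      intro z hz
      obtain ⟨hz1, hz2⟩ := hz
      have h2 : HasDerivAt (fun y : ℝ => y - y^2/2 + y^3/3 - 2*y^4)
          (1 - z + z^2 - 8*z^3) z := by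
        have := (((hasDerivAt_id z).sub ((hasDerivAt_pow 2 z).div_const 2)).add
          ((hasDerivAt_pow 3 z).div_const 3)).sub ((hasDerivAt_pow 4 z).const_mul 2)
        exact this.congr_deriv (by push_cast; ring)
      exact (hasDeriv_logpart z (by linarith)).sub h2
    apply antitoneOn_of_deriv_nonpos (convex_Icc _ _)
    · apply ContinuousOn.sub
      · apply ContinuousOn.log (by fun_prop)
        intro z hz; obtain ⟨h1, _⟩ := hz; linarith
      · fun_prop
    · rw [interior_Icc]
      intro z hz
      exact (hd z hz).differentiableAt.differentiableWithinAt
    · rw [interior_Icc]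
      intro z hz
      rw [(hd z hz).deriv]
      obtain ⟨hz1, hz2⟩ := hz
      rw [sub_nonpos, div_le_iff₀ (by linarith)]
      nlinarith [sq_nonneg z, pow_nonneg (neg_nonneg.mpr hz2.le) 3]
  have h0 := key (Set.mem_Icc.mpr ⟨hy, hy2⟩) (Set.mem_Icc.mpr ⟨by norm_num, le_refl 0⟩) hy2
  simp at h0
  linarith

lemma logC (t e : ℝ) (hx : -1 ≤ t) (he0 : 0 < e) (he : e ≤ 1/2) :
    e*t - e^2*t^2/2 - e^3*t^2/3 - 2*e^4*t^2 ≤ Real.log (1+e*t) := by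
  rcases le_or_gt 0 t with ht | ht
  · have := logA (e*t) (by positivity)
    nlinarith [pow_pos he0 3, pow_pos he0 4, sq_nonneg t]
  · have hy1 : -(1/2) ≤ e*t := by nlinarith
    have hy2 : e*t ≤ 0 := by nlinarith
    have := logB (e*t) hy1 hy2
    have h1 : (e*t)^3 ≥ -(e^3*t^2) := by
      nlinarith [mul_nonneg (mul_nonneg (pow_pos he0 3).le (sq_nonneg t)) (by linarith : (0:ℝ) ≤ t+1)]
    have h2 : (e*t)^4 ≤ e^4*t^2 := by
      nlinarith [mul_nonneg (mul_nonneg (pow_pos he0 4).le (sq_nonneg t)) (mul_nonneg (neg_nonneg.mpr ht.le) (by linarith : (0:ℝ) ≤ t+1))]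
    nlinarith

lemma qpoly (q : ℝ) (hq : 0 ≤ q) :
    3*(1-q)^2*(1+q^2)^2 + (1+q)^3*(1+q^2) + 3*q^2*(1+q)^4 ≤ 6*(1+q^2)^4 := by
  nlinarith [sq_nonneg q, sq_nonneg (1-q), sq_nonneg (q^2), sq_nonneg (q*(1-q)), sq_nonneg (q^2-q), pow_nonneg hq 3, pow_nonneg hq 4, sq_nonneg (1-2*q^2)]

set_option maxHeartbeats 1000000 in
lemma key_tq (t q e : ℝ) (hq : 0 < q) (hq2 : 2*q^2 ≤ 1) (ht : 0 < t) (ht2 : 2*t ≤ q^2)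
    (he1 : t ≤ e) (he2 : e ≤ t*(1+q)/(1+q^2)) :
    3*(e-t)^2 + 2*e^3 + 12*e^4 ≤ 6*t^2*q^2 := by
  set u : ℝ := t*(1+q)/(1+q^2) with hu
  have hq2pos : (0:ℝ) < 1 + q^2 := by positivity
  have hq1 : q ≤ 1 := by nlinarith
  have hut : t ≤ u := by
    rw [hu, le_div_iff₀ hq2pos]
    nlinarith [mul_nonneg (mul_nonneg ht.le hq.le) (sub_nonneg.mpr hq1)]
  have he0 : 0 ≤ e := le_trans ht.le he1
  have e1 : (e-t)^2 ≤ (u-t)^2 := by nlinarith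
  have e3 : e^3 ≤ u^3 := by nlinarith [sq_nonneg e, sq_nonneg u, sq_nonneg (e+u)]
  have e4 : e^4 ≤ u^4 := by nlinarith [pow_le_pow_left₀ he0 he2 4]
  have main : 3*(u-t)^2 + 2*u^3 + 12*u^4 ≤ 6*t^2*q^2 := by
    have hud : u - t = t*(q - q^2)/(1+q^2) := by rw [hu]; field_simp; ring
    have hT1 : 3*(u-t)^2 = (3*t^2*q^2*(1-q)^2*(1+q^2)^2)/(1+q^2)^4 := by
      rw [hud]; field_simp
    have hT2 : 2*u^3 ≤ (t^2*q^2*(1+q)^3*(1+q^2))/(1+q^2)^4 := by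
      have hu3 : 2*u^3 = 2*t^3*(1+q)^3/(1+q^2)^3 := by rw [hu]; field_simp
      rw [hu3, div_le_div_iff₀ (by positivity) (by positivity)]
      nlinarith [mul_nonneg (mul_nonneg (mul_nonneg (sq_nonneg t)
        (pow_nonneg (by linarith : (0:ℝ) ≤ 1+q) 3))
        (pow_nonneg (by positivity : (0:ℝ) ≤ 1+q^2) 4)) (sub_nonneg.mpr ht2)]
    have hT3 : 12*u^4 ≤ (3*t^2*q^4*(1+q)^4)/(1+q^2)^4 := by
      have hu4 : 12*u^4 = 12*t^4*(1+q)^4/(1+q^2)^4 := by rw [hu]; field_simp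
      rw [hu4, div_le_div_iff₀ (by positivity) (by positivity)]
      have hq4 : 4*t^2 ≤ q^4 := by nlinarith
      nlinarith [mul_nonneg (mul_nonneg (mul_nonneg (sq_nonneg t)
        (pow_nonneg (by linarith : (0:ℝ) ≤ 1+q) 4))
        (pow_nonneg (by positivity : (0:ℝ) ≤ 1+q^2) 4)) (sub_nonneg.mpr hq4)]
    have hsum : (3*t^2*q^2*(1-q)^2*(1+q^2)^2)/(1+q^2)^4 + (t^2*q^2*(1+q)^3*(1+q^2))/(1+q^2)^4
        + (3*t^2*q^4*(1+q)^4)/(1+q^2)^4 ≤ 6*t^2*q^2 := by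
      rw [← add_div, ← add_div, div_le_iff₀ (by positivity)]
      have hpoly := qpoly q hq.le
      have hmul := mul_le_mul_of_nonneg_left hpoly (by positivity : (0:ℝ) ≤ t^2*q^2)
      nlinarith [hmul]
    linarith
  linarith

lemma prod_lb (x : ℕ → ℝ) (hx : ∀ i, -1 ≤ x i) (n : ℕ) (e : ℝ) (he0 : 0 < e) (he : e ≤ 1/2) :
    Real.exp (e * S x n - e^2 * A2 x n/2 - e^3 * A2 x n/3 - 2*e^4 * A2 x n)
      ≤ ∏ i ∈ Finset.range n, (1 + e * x i) := by
  have hpos : ∀ i, (0:ℝ) < 1 + e * x i := fun i => by nlinarith [hx i]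
  have hprod : ∏ i ∈ Finset.range n, (1 + e * x i)
      = Real.exp (∑ i ∈ Finset.range n, Real.log (1 + e * x i)) := by
    rw [Real.exp_sum]
    exact Finset.prod_congr rfl fun i _ => (Real.exp_log (hpos i)).symm
  rw [hprod]
  apply Real.exp_le_exp.mpr
  have heq : e * S x n - e^2 * A2 x n/2 - e^3 * A2 x n/3 - 2*e^4 * A2 x n
      = ∑ i ∈ Finset.range n, (e*(x i) - e^2*(x i)^2/2 - e^3*(x i)^2/3 - 2*e^4*(x i)^2) := by
    simp only [S, A2, Finset.mul_sum, Finset.sum_div, ← Finset.sum_sub_distrib]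
  rw [heq]
  exact Finset.sum_le_sum fun i _ => logC (x i) e (hx i) he0 he

set_option maxHeartbeats 1000000 in
theorem refined_inequality_weighted (π : ℝ → ℝ) (επ δπ : ℝ) (hπ : Assumption1 π επ δπ)
    (c : ℝ → ℝ) (hc0 : ∀ ε ∈ Set.Ioo (0 : ℝ) 1, 0 ≤ c ε)
    (hcdec : AntitoneOn c (Set.Ioo (0 : ℝ) 1))
    (hcint : MeasureTheory.IntegrableOn (fun ε => c ε * π ε) (Set.Ioo (0 : ℝ) 1))
    (n : ℕ) (hn : 1 ≤ n) (x : ℕ → ℝ) (hx : ∀ i, -1 ≤ x i)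
    (hS : 0 < S x n)
    (h2 : max 2 (1 / επ) < (S x n) ^ 2 / A2 x n)
    (h3 : (S x n) ^ 3 / (A2 x n) ^ 2 < 1 / 2) :
    c ((1 + Real.sqrt (A2 x n) / S x n) / (1 + A2 x n / (S x n) ^ 2) * (S x n / A2 x n)) *
        (1 / (6 * Real.exp 1)) * (1 / Real.sqrt (A2 x n)) * π (S x n / A2 x n) *
        Real.exp ((S x n) ^ 2 / (2 * A2 x n))
      ≤ K (fun ε => c ε * π ε) x n := by
  obtain ⟨⟨hεπ0, hεπ1⟩, hδ, hπ0, hπint, hπδ, hπmono⟩ := hπ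
  have hbnn : 0 ≤ A2 x n := Finset.sum_nonneg fun i _ => sq_nonneg _
  have hbpos : 0 < A2 x n := by
    rcases hbnn.lt_or_eq with h | h
    · exact h
    · exfalso
      have h2' : (2:ℝ) < (S x n)^2 / A2 x n := lt_of_le_of_lt (le_max_left _ _) h2
      rw [← h, div_zero] at h2'
      linarith
  set s := S x n with hs_def
  set a := Real.sqrt (A2 x n) with ha_def
  have hapos : 0 < a := Real.sqrt_pos.mpr hbpos
  have hA2 : A2 x n = a^2 := (Real.sq_sqrt hbnn).symm
  rw [hA2] at h2 h3 ⊢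
  have h2' : (2:ℝ) < s^2 / a^2 := lt_of_le_of_lt (le_max_left _ _) h2
  have hεπ' : 1/επ < s^2 / a^2 := lt_of_le_of_lt (le_max_right _ _) h2
  have ha2pos : (0:ℝ) < a^2 := by positivity
  have h2b : 2*a^2 < s^2 := by rw [lt_div_iff₀ ha2pos] at h2'; linarith
  have hbεπ : a^2 < επ * s^2 := by
    rw [div_lt_div_iff₀ hεπ0 ha2pos] at hεπ'; linarith
  have h3b : 2*s^3 < a^4 := by
    rw [div_lt_iff₀ (by positivity)] at h3; nlinarith
  have has : a < s := by nlinarith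
  set t := s / a^2 with ht_def
  have htpos : 0 < t := div_pos hS ha2pos
  set u := (1 + a / s) / (1 + a^2 / s^2) * (s / a^2) with hu_def
  have hueq : u = s^2*(s+a)/(a^2*(s^2+a^2)) := by
    rw [hu_def]; field_simp
  have htu : t < u := by
    rw [hueq, ht_def, div_lt_div_iff₀ ha2pos (by positivity)]
    nlinarith [mul_pos hS (mul_pos hapos (sub_pos.mpr has))]
  have hub : u < a^2/s^2 := by
    rw [hueq, div_lt_div_iff₀ (by positivity) (by positivity)]
    have haux : 0 ≤ s^2 - s*a + 2*a^2 := by nlinarith [sq_nonneg (s-a), mul_pos hapos hS]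
    nlinarith [mul_lt_mul_of_pos_right h3b (by positivity : (0:ℝ) < s^2+a^2),
      mul_nonneg (pow_pos hS 3).le haux]
  have hba : a^2/s^2 < επ := by rw [div_lt_iff₀ (by positivity)]; linarith
  have hbhalf : a^2/s^2 < 1/2 := by rw [div_lt_iff₀ (by positivity)]; linarith
  have huεπ : u < επ := hub.trans hba
  have huhalf : u < 1/2 := hub.trans hbhalf
  have hu1 : u < 1 := by linarith
  have hupos : 0 < u := htpos.trans htu
  have ht1 : t < 1 := by linarith
  have hq2 : 2*(a/s)^2 ≤ 1 := by
    rw [div_pow, ← mul_div_assoc, div_le_one (by positivity)]; linarith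
  have ht2 : 2*t ≤ (a/s)^2 := by
    show 2*(s/a^2) ≤ (a/s)^2
    rw [div_pow, ← mul_div_assoc, div_le_div_iff₀ ha2pos (by positivity)]
    nlinarith
  have hueq2 : u = t*(1+a/s)/(1+(a/s)^2) := by
    rw [hu_def, ht_def]; field_simp
  have htq : 6*t^2*(a/s)^2 = 6/a^2 := by
    rw [ht_def]; field_simp
  have hIcc_sub : Icc t u ⊆ Ioo (0:ℝ) 1 := fun y hy =>
    ⟨lt_of_lt_of_le htpos hy.1, lt_of_le_of_lt hy.2 hu1⟩
  have h7a5s : 7*a ≤ 5*s := by nlinarith [mul_pos hapos hS]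
  have humt : u - t = s*a*(s-a)/(a^2*(s^2+a^2)) := by
    rw [hueq, ht_def]; field_simp; ring
  have hfrac : 1/(6*a) ≤ (u - t)*t/u := by
    have hx1 : (u - t)*t/u = (s-a)/(a*(s+a)) := by
      rw [humt, ht_def, hueq]; field_simp
    rw [hx1, div_le_div_iff₀ (by positivity) (by positivity)]
    nlinarith [mul_le_mul_of_nonneg_left (show s+a ≤ 6*(s-a) by linarith) hapos.le]
  -- the integrand
  set F := fun e : ℝ => (∏ i ∈ Finset.range n, (1 + e * x i)) * (c e * π e) with hF_def
  have hKeq : K (fun ε => c ε * π ε) x n = ∫ e in Ioo (0:ℝ) 1, F e := rfl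
  have hcont : Continuous fun e : ℝ => ∏ i ∈ Finset.range n, (1 + e * x i) := by
    apply continuous_finset_prod
    intro i _
    exact continuous_const.add (continuous_id.mul continuous_const)
  obtain ⟨C, hC⟩ := isCompact_Icc.exists_bound_of_continuousOn
    (s := Icc (0:ℝ) 1) hcont.continuousOn
  have hmeas : AEStronglyMeasurable F (volume.restrict (Ioo (0:ℝ) 1)) :=
    hcont.aestronglyMeasurable.mul hcint.aestronglyMeasurable
  have hFint : IntegrableOn F (Ioo (0:ℝ) 1) := by
    apply Integrable.mono' (g := fun e => C * |c e * π e|) ((hcint.abs).const_mul C) hmeas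
    filter_upwards [ae_restrict_mem measurableSet_Ioo] with e he
    show ‖(∏ i ∈ Finset.range n, (1 + e * x i)) * (c e * π e)‖ ≤ C * |c e * π e|
    rw [Real.norm_eq_abs, abs_mul]
    exact mul_le_mul_of_nonneg_right
      (by have h := hC e (Ioo_subset_Icc_self he); rwa [Real.norm_eq_abs] at h) (abs_nonneg _)
  have hF0 : 0 ≤ᵐ[volume.restrict (Ioo (0:ℝ) 1)] F := by
    filter_upwards [ae_restrict_mem measurableSet_Ioo] with e he
    show (0:ℝ) ≤ (∏ i ∈ Finset.range n, (1 + e * x i)) * (c e * π e)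
    apply mul_nonneg
    · exact Finset.prod_nonneg fun i _ => by nlinarith [hx i, he.1, he.2]
    · exact mul_nonneg (hc0 e he) (hπ0 e (Ioo_subset_Icc_self he))
  have hπt : 0 ≤ π t := hπ0 t ⟨htpos.le, by linarith⟩
  have hcu : 0 ≤ c u := hc0 u ⟨hupos, hu1⟩
  set E := Real.exp (s^2/(2*a^2) - 1) with hE_def
  set m := E * (c u * (t * π t / u)) with hm_def
  have hpoint : ∀ e ∈ Icc t u, m ≤ F e := by
    rintro e ⟨he1, he2⟩
    have hepos : 0 < e := lt_of_lt_of_le htpos he1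
    have hehalf : e ≤ 1/2 := by linarith
    have he1' : e < 1 := by linarith
    have hce : c u ≤ c e := hcdec ⟨hepos, he1'⟩ ⟨hupos, hu1⟩ he2
    have heεπ : e < επ := by linarith
    have hmon := hπmono ⟨htpos, by linarith⟩ ⟨hepos, heεπ⟩ he1
    simp only at hmon
    have hπe : t * π t / u ≤ π e := by
      have h1 : t * π t / u ≤ t * π t / e := by
        rw [div_le_div_iff₀ hupos hepos]
        exact mul_le_mul_of_nonneg_left he2 (mul_nonneg htpos.le hπt)
      have h2 : t * π t / e ≤ π e := by
        rw [div_le_iff₀ hepos]; linarith [hmon]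
      linarith
    have hπe0 : 0 ≤ t * π t / u := by positivity
    have hprod := prod_lb x hx n e hepos hehalf
    rw [hA2, ← hs_def] at hprod
    -- exponent bound via key_tq
    have hQ := key_tq t (a/s) e (by positivity) hq2 htpos ht2 he1 (by rw [← hueq2]; exact he2)
    rw [htq] at hQ
    have hid : e*s - e^2*a^2/2 - e^3*a^2/3 - 2*e^4*a^2
        = s^2/(2*a^2) - (a^2/6)*(3*(e-t)^2 + 2*e^3 + 12*e^4) := by
      rw [ht_def]; field_simp; ring
    have hone : (a^2/6)*(6/a^2) = 1 := by field_simp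
    have hkey : s^2/(2*a^2) - 1 ≤ e*s - e^2*a^2/2 - e^3*a^2/3 - 2*e^4*a^2 := by
      rw [hid]
      have := mul_le_mul_of_nonneg_left hQ (show (0:ℝ) ≤ a^2/6 by positivity)
      linarith
    have hF1 : E ≤ ∏ i ∈ Finset.range n, (1 + e * x i) :=
      le_trans (Real.exp_le_exp.mpr hkey) hprod
    have hprodnn : 0 ≤ ∏ i ∈ Finset.range n, (1 + e * x i) :=
      le_trans (Real.exp_pos _).le hF1
    have hcπ : c u * (t * π t / u) ≤ c e * π e :=
      mul_le_mul hce hπe hπe0 (le_trans hcu hce)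
    calc m = E * (c u * (t * π t / u)) := rfl
      _ ≤ (∏ i ∈ Finset.range n, (1 + e * x i)) * (c e * π e) :=
          mul_le_mul hF1 hcπ (mul_nonneg hcu hπe0) hprodnn
      _ = F e := rfl
  have hIccInt : IntegrableOn F (Icc t u) := hFint.mono_set hIcc_sub
  have step2 : (u - t) * m ≤ ∫ e in Icc t u, F e := by
    have hconst : ∫ _e in Icc t u, m = (u - t) * m := by
      rw [setIntegral_const, Real.volume_real_Icc, max_eq_left (by linarith), smul_eq_mul]
    rw [← hconst]
    exact setIntegral_mono_on
      (integrableOn_const (by rw [Real.volume_Icc]; exact ENNReal.ofReal_ne_top))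
      hIccInt measurableSet_Icc hpoint
  have step1 : ∫ e in Icc t u, F e ≤ ∫ e in Ioo (0:ℝ) 1, F e :=
    setIntegral_mono_set hFint hF0 (HasSubset.Subset.eventuallyLE hIcc_sub)
  -- final arithmetic
  have hfinal : c u * (1 / (6 * Real.exp 1)) * (1 / a) * π t * Real.exp (s^2/(2*a^2))
      ≤ (u - t) * m := by
    have hL : c u * (1 / (6 * Real.exp 1)) * (1 / a) * π t * Real.exp (s^2/(2*a^2))
        = (Real.exp (s^2/(2*a^2)) * (1/Real.exp 1) * (c u * π t)) * (1/(6*a)) := by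
      ring
    have hR : (u - t) * m
        = (Real.exp (s^2/(2*a^2)) * (1/Real.exp 1) * (c u * π t)) * ((u-t)*t/u) := by
      rw [hm_def, hE_def, Real.exp_sub]; ring
    rw [hL, hR]
    apply mul_le_mul_of_nonneg_left hfrac
    have := Real.exp_pos (s^2/(2*a^2))
    have := Real.exp_pos (1:ℝ)
    positivity
  calc c u * (1 / (6 * Real.exp 1)) * (1 / a) * π t * Real.exp (s^2/(2*a^2))
      ≤ (u - t) * m := hfinal
    _ ≤ ∫ e in Icc t u, F e := step2
    _ ≤ ∫ e in Ioo (0:ℝ) 1, F e := step1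
    _ = K (fun ε => c ε * π ε) x n := hKeq.symm
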